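/- (Nontrivial lower bound via consistency) Suppose the graph is connected, (C,C̄) is consistent with λ = NCut(C,C̄), and γ > gvol(V)·λ/4. Then any subset A with F̂_γ(A) ≤ λ must be consistent (violate no constraints), and F̂_γ(A) = NCut(A,Ā). -/
import Mathlib


open Finset

/-- cut(C, C̄) = 2 ∑_{i∈C, j∈C̄} w_{ij} -/
noncomputable def cutW {n : ℕ} (w : Fin n → Fin n → ℝ) (C : Finset (Fin n)) : ℝ :=
  2 * ∑ i ∈ C, ∑ j ∈ Cᶜ, w i j

/-- generalized volume gvol(C) = ∑_{i∈C} b_i -/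
noncomputable def gvol {n : ℕ} (b : Fin n → ℝ) (C : Finset (Fin n)) : ℝ := ∑ i ∈ C, b i

/-- bal(C) = 2 gvol(C) gvol(C̄) / gvol(V) -/
noncomputable def bal {n : ℕ} (b : Fin n → ℝ) (C : Finset (Fin n)) : ℝ :=
  2 * gvol b C * gvol b Cᶜ / gvol b Finset.univ

/-- NCut(C,C̄) = cut(C,C̄)/bal(C) -/
noncomputable def ncut {n : ℕ} (w : Fin n → Fin n → ℝ) (b : Fin n → ℝ) (C : Finset (Fin n)) : ℝ :=
  cutW w C / bal b C

/-- M̂(C) = 2 ∑_{i∈C, j∈C̄} q^m_{ij}, twice the number of violated must-links -/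
noncomputable def Mhat {n : ℕ} (qm : Fin n → Fin n → ℝ) (C : Finset (Fin n)) : ℝ :=
  2 * ∑ i ∈ C, ∑ j ∈ Cᶜ, qm i j

/-- N̂(C) = ∑_{i,j∈C} q^c_{ij} + ∑_{i,j∈C̄} q^c_{ij}, twice the number of violated cannot-links -/
noncomputable def Nhat {n : ℕ} (qc : Fin n → Fin n → ℝ) (C : Finset (Fin n)) : ℝ :=
  (∑ i ∈ C, ∑ j ∈ C, qc i j) + ∑ i ∈ Cᶜ, ∑ j ∈ Cᶜ, qc i j

/-- F̂_γ(C) = (cut(C,C̄) + γ(M̂(C)+N̂(C))) / bal(C) -/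
noncomputable def Fhat {n : ℕ} (w : Fin n → Fin n → ℝ) (b : Fin n → ℝ)
    (qm qc : Fin n → Fin n → ℝ) (γ : ℝ) (C : Finset (Fin n)) : ℝ :=
  (cutW w C + γ * (Mhat qm C + Nhat qc C)) / bal b C

lemma sum2_nonneg {n : ℕ} (q : Fin n → Fin n → ℝ) (hq : ∀ i j, q i j = 0 ∨ q i j = 1)
    (S T : Finset (Fin n)) : 0 ≤ ∑ i ∈ S, ∑ j ∈ T, q i j := by
  refine Finset.sum_nonneg fun i _ => Finset.sum_nonneg fun j _ => ?_
  rcases hq i j with h | h <;> simp [h]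

lemma one_le_sum2 {n : ℕ} (q : Fin n → Fin n → ℝ) (hq : ∀ i j, q i j = 0 ∨ q i j = 1)
    (S T : Finset (Fin n)) (i j : Fin n) (hi : i ∈ S) (hj : j ∈ T) (h1 : q i j = 1) :
    (1 : ℝ) ≤ ∑ a ∈ S, ∑ c ∈ T, q a c := by
  have h2 : q i j ≤ ∑ c ∈ T, q i c :=
    Finset.single_le_sum (f := fun c => q i c)
      (fun c _ => by rcases hq i c with h | h <;> simp [h]) hj
  have h3 : ∑ c ∈ T, q i c ≤ ∑ a ∈ S, ∑ c ∈ T, q a c :=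
    Finset.single_le_sum (f := fun a => ∑ c ∈ T, q a c)
      (fun a _ => Finset.sum_nonneg fun c _ => by rcases hq a c with h | h <;> simp [h]) hi
  linarith [h1 ▸ h2]

lemma two_le_symm_sum {n : ℕ} (q : Fin n → Fin n → ℝ) (hq : ∀ i j, q i j = 0 ∨ q i j = 1)
    (hsymm : ∀ i j, q i j = q j i) (S : Finset (Fin n)) (i j : Fin n)
    (hi : i ∈ S) (hj : j ∈ S) (hij : i ≠ j) (h1 : q i j = 1) :
    (2 : ℝ) ≤ ∑ a ∈ S, ∑ c ∈ S, q a c := by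
  rw [← Finset.sum_product']
  have hsub : ({(i, j), (j, i)} : Finset (Fin n × Fin n)) ⊆ S ×ˢ S := by
    intro p hp
    simp only [Finset.mem_insert, Finset.mem_singleton] at hp
    rcases hp with rfl | rfl <;> simp [Finset.mem_product, hi, hj]
  have hpair : ∑ p ∈ ({(i, j), (j, i)} : Finset (Fin n × Fin n)), q p.1 p.2 = 2 := by
    rw [Finset.sum_pair (by simp [hij])]
    simp only
    rw [← hsymm i j, h1]; norm_num
  calc (2 : ℝ) = ∑ p ∈ ({(i, j), (j, i)} : Finset (Fin n × Fin n)), q p.1 p.2 := hpair.symm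
    _ ≤ ∑ p ∈ S ×ˢ S, q p.1 p.2 := by
        refine Finset.sum_le_sum_of_subset_of_nonneg hsub fun p _ _ => ?_
        rcases hq p.1 p.2 with h | h <;> simp [h]

/-- If (C,C̄) is consistent with λ = NCut(C,C̄) and γ > gvol(V)·λ/4, then any nontrivial
A with F̂_γ(A) ≤ λ is consistent and F̂_γ(A) = NCut(A,Ā). -/
theorem stmt_16 {n : ℕ} (w : Fin n → Fin n → ℝ) (b : Fin n → ℝ)
    (qm qc : Fin n → Fin n → ℝ)
    (hw_symm : ∀ i j, w i j = w j i) (hw_nonneg : ∀ i j, 0 ≤ w i j)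
    (hb : ∀ i, 0 < b i)
    (hqm01 : ∀ i j, qm i j = 0 ∨ qm i j = 1) (hqm_symm : ∀ i j, qm i j = qm j i)
    (hqc01 : ∀ i j, qc i j = 0 ∨ qc i j = 1) (hqc_symm : ∀ i j, qc i j = qc j i)
    (hconn : ∀ C : Finset (Fin n), C ≠ ∅ → C ≠ Finset.univ → 0 < cutW w C)
    (C : Finset (Fin n)) (hC₁ : C ≠ ∅) (hC₂ : C ≠ Finset.univ)
    (hcons : Mhat qm C = 0 ∧ Nhat qc C = 0)
    (γ : ℝ) (hγ : gvol b Finset.univ * ncut w b C / 4 < γ)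
    (A : Finset (Fin n)) (hA₁ : A ≠ ∅) (hA₂ : A ≠ Finset.univ)
    (hA : Fhat w b qm qc γ A ≤ ncut w b C) :
    (Mhat qm A = 0 ∧ Nhat qc A = 0) ∧ Fhat w b qm qc γ A = ncut w b A := by

  -- basic positivity facts
  have hgpos : ∀ S : Finset (Fin n), S ≠ ∅ → 0 < gvol b S := fun S hS =>
    Finset.sum_pos (fun i _ => hb i) (Finset.nonempty_iff_ne_empty.mpr hS)
  obtain ⟨i₀, hi₀⟩ := Finset.nonempty_iff_ne_empty.mpr hA₁
  have hAc : (Aᶜ : Finset (Fin n)) ≠ ∅ := by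
    intro h
    exact hA₂ (by simpa using congrArg compl h)
  have hCc : (Cᶜ : Finset (Fin n)) ≠ ∅ := by
    intro h
    exact hC₂ (by simpa using congrArg compl h)
  have hgV : 0 < gvol b Finset.univ :=
    hgpos Finset.univ (Finset.nonempty_iff_ne_empty.mp ⟨i₀, Finset.mem_univ i₀⟩)
  have hbalA : 0 < bal b A :=
    div_pos (mul_pos (mul_pos two_pos (hgpos A hA₁)) (hgpos Aᶜ hAc)) hgV
  have hbalC : 0 < bal b C :=
    div_pos (mul_pos (mul_pos two_pos (hgpos C hC₁)) (hgpos Cᶜ hCc)) hgV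
  have hlam : 0 < ncut w b C := div_pos (hconn C hC₁ hC₂) hbalC
  have hγpos : 0 < γ :=
    lt_trans (div_pos (mul_pos hgV hlam) (by norm_num)) hγ
  have hMA : 0 ≤ Mhat qm A := by
    have := sum2_nonneg qm hqm01 A Aᶜ
    unfold Mhat; linarith
  have hNA : 0 ≤ Nhat qc A := by
    have h1 := sum2_nonneg qc hqc01 A A
    have h2 := sum2_nonneg qc hqc01 Aᶜ Aᶜ
    unfold Nhat; linarith
  -- diagonal of qc vanishes, because C is consistent
  have hdiag : ∀ i, qc i i = 0 := by
    intro i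
    have h2 := hcons.2
    unfold Nhat at h2
    have hn1 := sum2_nonneg qc hqc01 C C
    have hn2 := sum2_nonneg qc hqc01 Cᶜ Cᶜ
    by_contra hne
    have h1 : qc i i = 1 := (hqc01 i i).resolve_left hne
    by_cases hiC : i ∈ C
    · have := one_le_sum2 qc hqc01 C C i i hiC hiC h1
      linarith
    · have hiC' : i ∈ Cᶜ := Finset.mem_compl.mpr hiC
      have := one_le_sum2 qc hqc01 Cᶜ Cᶜ i i hiC' hiC' h1
      linarith
  -- bal A ≤ gvol V / 2
  have hsum : gvol b A + gvol b Aᶜ = gvol b Finset.univ := by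
    unfold gvol; exact Finset.sum_add_sum_compl A b
  have hbal_le : bal b A ≤ gvol b Finset.univ / 2 := by
    unfold bal
    rw [div_le_div_iff₀ hgV two_pos]
    nlinarith [sq_nonneg (gvol b A - gvol b Aᶜ)]
  -- key step: the penalty of A vanishes
  have hzero : Mhat qm A + Nhat qc A = 0 := by
    by_contra hne
    have hs : (2 : ℝ) ≤ Mhat qm A + Nhat qc A := by
      rcases lt_or_eq_of_le hMA with hM | hM
      · -- some must-link is violated
        have hSpos : 0 < ∑ i ∈ A, ∑ j ∈ Aᶜ, qm i j := by unfold Mhat at hM; linarith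
        obtain ⟨i, hi, hrow⟩ : ∃ i ∈ A, 0 < ∑ j ∈ Aᶜ, qm i j := by
          by_contra h
          push_neg at h
          have : ∑ i ∈ A, ∑ j ∈ Aᶜ, qm i j ≤ 0 := Finset.sum_nonpos fun i hi => h i hi
          linarith
        obtain ⟨j, hj, hq⟩ : ∃ j ∈ Aᶜ, 0 < qm i j := by
          by_contra h
          push_neg at h
          have : ∑ j ∈ Aᶜ, qm i j ≤ 0 := Finset.sum_nonpos fun j hj => h j hj
          linarith
        have h1 : qm i j = 1 := (hqm01 i j).resolve_left (by linarith)
        have := one_le_sum2 qm hqm01 A Aᶜ i j hi hj h1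
        unfold Mhat; linarith
      · -- some cannot-link is violated
        rcases lt_or_eq_of_le hNA with hN | hN
        · have key : ∀ S : Finset (Fin n), 0 < ∑ a ∈ S, ∑ c ∈ S, qc a c →
              (2 : ℝ) ≤ ∑ a ∈ S, ∑ c ∈ S, qc a c := by
            intro S hSpos
            obtain ⟨i, hi, hrow⟩ : ∃ i ∈ S, 0 < ∑ c ∈ S, qc i c := by
              by_contra h
              push_neg at h
              have : ∑ a ∈ S, ∑ c ∈ S, qc a c ≤ 0 := Finset.sum_nonpos fun a ha => h a ha
              linarith
            obtain ⟨j, hj, hq⟩ : ∃ j ∈ S, 0 < qc i j := by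
              by_contra h
              push_neg at h
              have : ∑ c ∈ S, qc i c ≤ 0 := Finset.sum_nonpos fun c hc => h c hc
              linarith
            have h1 : qc i j = 1 := (hqc01 i j).resolve_left (by linarith)
            have hij : i ≠ j := by
              intro h; rw [h, hdiag j] at h1; norm_num at h1
            exact two_le_symm_sum qc hqc01 hqc_symm S i j hi hj hij h1
          have hn1 := sum2_nonneg qc hqc01 A A
          have hn2 := sum2_nonneg qc hqc01 Aᶜ Aᶜ
          unfold Nhat at hN ⊢
          rcases lt_or_ge 0 (∑ a ∈ A, ∑ c ∈ A, qc a c) with h | h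
          · have := key A h; linarith
          · have h2 : 0 < ∑ a ∈ Aᶜ, ∑ c ∈ Aᶜ, qc a c := by linarith
            have := key Aᶜ h2; linarith
        · exact absurd (by linarith) hne
    -- derive the contradiction
    have hcutA : 0 < cutW w A := hconn A hA₁ hA₂
    have h1 : cutW w A + γ * (Mhat qm A + Nhat qc A) ≤ ncut w b C * bal b A := by
      have hrw : Fhat w b qm qc γ A =
          (cutW w A + γ * (Mhat qm A + Nhat qc A)) / bal b A := rfl
      rw [hrw] at hA
      exact (div_le_iff₀ hbalA).mp hA
    have h2 : ncut w b C * bal b A ≤ ncut w b C * (gvol b Finset.univ / 2) :=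
      mul_le_mul_of_nonneg_left hbal_le hlam.le
    have h3 : 2 * γ ≤ γ * (Mhat qm A + Nhat qc A) := by nlinarith
    nlinarith
  have hM0 : Mhat qm A = 0 := by linarith
  have hN0 : Nhat qc A = 0 := by linarith
  refine ⟨⟨hM0, hN0⟩, ?_⟩
  unfold Fhat ncut
  rw [hM0, hN0]
  norm_num
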